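/- For every j ≥ 1 and m ≥ 1, writing ℓ = Σ_{i=j+1}^{j+m} g_i, the autocovariance of the squared returns satisfies Cov(r_j², r_{j+m}²) = exp(2μ + σ²/(1−φ²)) · (exp(σ² φ^{ℓ}/(1−φ²)) − 1). In particular this covariance depends on (j, m) only through the elapsed gap time ℓ, so the squared-return process (r_j²) is weakly stationary. -/

import Mathlib

open MeasureTheory ProbabilityTheory Real Finset

open Filter
open scoped ENNReal NNReal


lemma rpow_two_eq (y : ℝ) : y ^ (2:ℝ) = y ^ 2 := by
  rw [show (2:ℝ) = ((2:ℕ):ℝ) by norm_num, Real.rpow_natCast]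

lemma sq_exp_integrable (b : ℝ) (hb : 0 < b) :
    Integrable (fun x : ℝ => x ^ 2 * Real.exp (-b * x ^ 2)) := by
  have h := integrable_rpow_mul_exp_neg_mul_sq hb (s := 2) (by norm_num)
  exact h.congr (Filter.Eventually.of_forall fun x => by simp only [rpow_two_eq])

lemma tendsto_mul_exp_atTop :
    Tendsto (fun x : ℝ => x * Real.exp (-(1/2 : ℝ) * x ^ 2)) atTop (nhds 0) := by
  have h := rpow_mul_exp_neg_mul_sq_isLittleO_exp_neg (b := (1/2:ℝ)) (by norm_num) 1
  have h2 : Tendsto (fun x : ℝ => Real.exp (-(1/2) * x)) atTop (nhds 0) := by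
    have h1 : Tendsto (fun x : ℝ => (1/2) * x) atTop atTop :=
      Tendsto.const_mul_atTop (by norm_num) tendsto_id
    exact (Real.tendsto_exp_neg_atTop_nhds_zero.comp h1).congr fun x => by
      simp [Function.comp, neg_mul]
  have h3 := h.isBigO.trans_tendsto h2
  exact h3.congr' (Filter.Eventually.of_forall fun x => by rw [Real.rpow_one])

lemma tendsto_mul_exp_atBot :
    Tendsto (fun x : ℝ => x * Real.exp (-(1/2 : ℝ) * x ^ 2)) atBot (nhds 0) := by
  have h := tendsto_mul_exp_atTop.neg
  rw [neg_zero] at h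
  have h' : Tendsto ((fun x : ℝ => x * Real.exp (-(1/2:ℝ) * x ^ 2)) ∘ Neg.neg) atTop (nhds 0) :=
    h.congr fun x => by simp only [Function.comp_apply, neg_sq, neg_mul]
  rw [← Filter.map_neg_atTop, Filter.tendsto_map'_iff]
  exact h'

lemma hasDerivAt_F (x : ℝ) :
    HasDerivAt (fun y : ℝ => -(y * Real.exp (-(1/2:ℝ) * y ^ 2)))
      (x ^ 2 * Real.exp (-(1/2:ℝ) * x ^ 2) - Real.exp (-(1/2:ℝ) * x ^ 2)) x := by
  have h1 : HasDerivAt (fun y : ℝ => -(1/2:ℝ) * y ^ 2) (-(1/2:ℝ) * (2 * x)) x := by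
    have := (hasDerivAt_pow 2 x).const_mul (-(1/2:ℝ))
    convert this using 1
    rfl
    rfl
    simp
  have h2 := h1.exp
  have h3 := (hasDerivAt_id x).mul h2
  have h4 := h3.neg
  convert h4 using 1
  rfl
  rfl
  rfl
  simp only [id_eq, pow_one]
  ring

lemma integrable_exp_half : Integrable (fun x : ℝ => Real.exp (-(1/2:ℝ) * x ^ 2)) :=
  integrable_exp_neg_mul_sq (by norm_num)

lemma integrable_F' :
    Integrable (fun x : ℝ => x ^ 2 * Real.exp (-(1/2:ℝ) * x ^ 2) - Real.exp (-(1/2:ℝ) * x ^ 2)) :=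
  (sq_exp_integrable _ (by norm_num)).sub integrable_exp_half

lemma integral_F'_eq_zero :
    ∫ x : ℝ, (x ^ 2 * Real.exp (-(1/2:ℝ) * x ^ 2) - Real.exp (-(1/2:ℝ) * x ^ 2)) = 0 := by
  set F : ℝ → ℝ := fun y => -(y * Real.exp (-(1/2:ℝ) * y ^ 2)) with hF
  set F' : ℝ → ℝ := fun x => x ^ 2 * Real.exp (-(1/2:ℝ) * x ^ 2) - Real.exp (-(1/2:ℝ) * x ^ 2)
  have hderiv : ∀ x : ℝ, HasDerivAt F (F' x) x := hasDerivAt_F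
  have htop : Tendsto F atTop (nhds 0) := by
    have := tendsto_mul_exp_atTop.neg; rw [neg_zero] at this; exact this
  have hbot : Tendsto F atBot (nhds 0) := by
    have := tendsto_mul_exp_atBot.neg; rw [neg_zero] at this; exact this
  have hIoi : ∫ x in Set.Ioi (0:ℝ), F' x = 0 - F 0 := by
    refine MeasureTheory.integral_Ioi_of_hasDerivAt_of_tendsto
      (hderiv 0).continuousAt.continuousWithinAt (fun x _ => hderiv x)
      integrable_F'.integrableOn htop
  have hIic : ∫ x in Set.Iic (0:ℝ), F' x = F 0 - 0 := by
    refine MeasureTheory.integral_Iic_of_hasDerivAt_of_tendsto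
      (hderiv 0).continuousAt.continuousWithinAt (fun x _ => hderiv x)
      integrable_F'.integrableOn hbot
  rw [← intervalIntegral.integral_Iic_add_Ioi (b := (0:ℝ)) integrable_F'.integrableOn integrable_F'.integrableOn,
    hIoi, hIic]
  ring

lemma integral_sq_exp_half :
    ∫ x : ℝ, x ^ 2 * Real.exp (-(1/2:ℝ) * x ^ 2) = Real.sqrt (2 * Real.pi) := by
  have h := integral_F'_eq_zero
  rw [integral_sub (sq_exp_integrable _ (by norm_num)) integrable_exp_half, sub_eq_zero] at h
  rw [h, integral_gaussian]
  rw [show Real.pi / (1/2) = 2 * Real.pi by ring]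

lemma gaussianReal_eq_withDensity (m : ℝ) {v : ℝ≥0} (hv : v ≠ 0) :
    gaussianReal m v
      = volume.withDensity (fun x => ((gaussianPDFReal m v x).toNNReal : ℝ≥0∞)) := by
  rw [gaussianReal_of_var_ne_zero m hv]
  rfl

lemma integrable_gaussianReal_iff (m : ℝ) {v : ℝ≥0} (hv : v ≠ 0) {f : ℝ → ℝ} :
    Integrable f (gaussianReal m v)
      ↔ Integrable (fun x => gaussianPDFReal m v x * f x) volume := by
  rw [gaussianReal_eq_withDensity m hv,
    integrable_withDensity_iff_integrable_smul ((measurable_gaussianPDFReal m v).real_toNNReal)]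
  refine integrable_congr (Filter.Eventually.of_forall fun x => ?_)
  simp [NNReal.smul_def, Real.coe_toNNReal _ (gaussianPDFReal_nonneg m v x)]

lemma integral_gaussianReal_eq (m : ℝ) {v : ℝ≥0} (hv : v ≠ 0) (f : ℝ → ℝ) :
    ∫ x, f x ∂(gaussianReal m v) = ∫ x, gaussianPDFReal m v x * f x := by
  rw [gaussianReal_eq_withDensity m hv,
    integral_withDensity_eq_integral_smul ((measurable_gaussianPDFReal m v).real_toNNReal)]
  refine integral_congr_ae (Filter.Eventually.of_forall fun x => ?_)
  simp [NNReal.smul_def, Real.coe_toNNReal _ (gaussianPDFReal_nonneg m v x)]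

lemma pdf_mul_exp {v : ℝ≥0} (hv : v ≠ 0) (t x : ℝ) :
    gaussianPDFReal 0 v x * Real.exp (t*x)
      = Real.exp ((v:ℝ)*t^2/2) * gaussianPDFReal ((v:ℝ)*t) v x := by
  have hv' : (v:ℝ) ≠ 0 := by exact_mod_cast hv
  have key : -(x - 0) ^ 2 / (2 * (v:ℝ)) + t * x = (v:ℝ)*t^2/2 + -(x - (v:ℝ)*t)^2/(2*(v:ℝ)) := by
    field_simp
    ring
  simp only [gaussianPDFReal]
  rw [mul_assoc, ← Real.exp_add, key, Real.exp_add]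
  ring

lemma integrable_exp_gaussianReal (v : ℝ≥0) (t : ℝ) :
    Integrable (fun y => Real.exp (t*y)) (gaussianReal 0 v) := by
  by_cases hv : v = 0
  · rw [hv, gaussianReal_zero_var]
    exact (integrable_const _).congr (ae_eq_dirac (fun y => Real.exp (t*y))).symm
  · rw [integrable_gaussianReal_iff 0 hv]
    exact ((integrable_gaussianPDFReal ((v:ℝ)*t) v).const_mul
      (Real.exp ((v:ℝ)*t^2/2))).congr
      (Filter.Eventually.of_forall fun x => (pdf_mul_exp hv t x).symm)

lemma integral_exp_gaussianReal (v : ℝ≥0) (t : ℝ) :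
    ∫ y, Real.exp (t*y) ∂(gaussianReal 0 v) = Real.exp ((v:ℝ)*t^2/2) := by
  by_cases hv : v = 0
  · rw [hv, gaussianReal_zero_var, integral_dirac]
    simp
  · rw [integral_gaussianReal_eq 0 hv]
    simp_rw [pdf_mul_exp hv t]
    rw [integral_const_mul, integral_gaussianPDFReal_eq_one _ hv, mul_one]

lemma pdf01_mul_sq (x : ℝ) :
    gaussianPDFReal 0 1 x * x^2 = (Real.sqrt (2*π))⁻¹ * (x^2 * Real.exp (-(1/2:ℝ)*x^2)) := by
  simp only [gaussianPDFReal, NNReal.coe_one, mul_one, sub_zero]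
  rw [show -x^2/(2:ℝ) = -(1/2:ℝ)*x^2 by ring]
  ring

lemma integrable_sq_gaussianReal : Integrable (fun y : ℝ => y^2) (gaussianReal 0 1) := by
  rw [integrable_gaussianReal_iff 0 one_ne_zero]
  exact ((sq_exp_integrable (1/2) (by norm_num)).const_mul
    (Real.sqrt (2*π))⁻¹).congr (Filter.Eventually.of_forall fun x => (pdf01_mul_sq x).symm)

lemma integral_sq_gaussianReal : ∫ y : ℝ, y^2 ∂(gaussianReal 0 1) = 1 := by
  rw [integral_gaussianReal_eq 0 one_ne_zero]
  simp_rw [pdf01_mul_sq]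
  rw [integral_const_mul, integral_sq_exp_half]
  rw [inv_mul_cancel₀]
  positivity

lemma gauss_map_exp {Ω : Type*} [MeasurableSpace Ω] {P : Measure Ω} {X : Ω → ℝ}
    (hX : Measurable X) {v : ℝ≥0} (hlaw : Measure.map X P = gaussianReal 0 v) (t : ℝ) :
    Integrable (fun ω => Real.exp (t * X ω)) P
      ∧ ∫ ω, Real.exp (t * X ω) ∂P = Real.exp ((v:ℝ) * t^2/2) := by
  have hm : AEStronglyMeasurable (fun y => Real.exp (t * y)) (Measure.map X P) :=
    (Real.continuous_exp.comp (continuous_const.mul continuous_id)).aestronglyMeasurable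
  constructor
  · have h := integrable_exp_gaussianReal v t
    rw [← hlaw] at h
    exact (integrable_map_measure hm hX.aemeasurable).mp h
  · rw [← integral_map hX.aemeasurable hm, hlaw, integral_exp_gaussianReal]

lemma gauss_map_sq {Ω : Type*} [MeasurableSpace Ω] {P : Measure Ω} {X : Ω → ℝ}
    (hX : Measurable X) (hlaw : Measure.map X P = gaussianReal 0 1) :
    Integrable (fun ω => (X ω)^2) P ∧ ∫ ω, (X ω)^2 ∂P = 1 := by
  have hm : AEStronglyMeasurable (fun y : ℝ => y^2) (Measure.map X P) :=
    (continuous_pow 2).aestronglyMeasurable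
  constructor
  · have h := integrable_sq_gaussianReal
    rw [← hlaw] at h
    exact (integrable_map_measure hm hX.aemeasurable).mp h
  · rw [← integral_map hX.aemeasurable hm, hlaw, integral_sq_gaussianReal]

lemma indep_lin_aux {Ω : Type*} [MeasurableSpace Ω] {P : Measure Ω} {η ε : ℕ → Ω → ℝ}
    (hmη : ∀ i, Measurable (η i)) (hmε : ∀ i, Measurable (ε i))
    (hindep : iIndepFun (Sum.elim η ε) P)
    (a : ℕ → ℝ) (s : Finset ℕ) {γ : Type*} [MeasurableSpace γ]
    (T : Finset (ℕ ⊕ ℕ)) (hT : ∀ i ∈ s, Sum.inl i ∉ T)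
    (G : (↥T → ℝ) → γ) (hG : Measurable G) :
    IndepFun (fun ω => ∑ i ∈ s, a i * η i ω)
      (fun ω => G (fun t : ↥T => Sum.elim η ε t ω)) P := by
  classical
  have hmeas : ∀ i : ℕ ⊕ ℕ, Measurable (Sum.elim η ε i) := by
    rintro (i | i)
    exacts [hmη i, hmε i]
  have hST : Disjoint (s.image (Sum.inl : ℕ → ℕ ⊕ ℕ)) T := by
    rw [Finset.disjoint_left]
    rintro u hu huT
    obtain ⟨i, hi, rfl⟩ := Finset.mem_image.mp hu
    exact hT i hi huT
  have base := hindep.indepFun_finset (s.image (Sum.inl : ℕ → ℕ ⊕ ℕ)) T hST hmeas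
  let F : (↥(s.image (Sum.inl : ℕ → ℕ ⊕ ℕ)) → ℝ) → ℝ :=
    fun p => ∑ i ∈ s.attach, a i.1 * p ⟨Sum.inl i.1, Finset.mem_image_of_mem _ i.2⟩
  have hFmeas : Measurable F := by
    apply Finset.measurable_sum
    intro i _
    exact (measurable_pi_apply _).const_mul _
  have hcomp := base.comp hFmeas hG
  have heq : (F ∘ fun ω (i : ↥(s.image (Sum.inl : ℕ → ℕ ⊕ ℕ))) => Sum.elim η ε i.1 ω)
      = fun ω => ∑ i ∈ s, a i * η i ω := by
    funext ω
    exact Finset.sum_attach s (fun i => a i * η i ω)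
  rw [heq] at hcomp
  exact hcomp

lemma cov_expand {Ω : Type*} [MeasurableSpace Ω] (P : Measure Ω) [IsProbabilityMeasure P]
    {A B : Ω → ℝ} (hA : Integrable A P) (hB : Integrable B P)
    (hAB : Integrable (fun ω => A ω * B ω) P) :
    ∫ ω, (A ω - ∫ a, A a ∂P) * (B ω - ∫ a, B a ∂P) ∂P
      = (∫ ω, A ω * B ω ∂P) - (∫ ω, A ω ∂P) * (∫ ω, B ω ∂P) := by
  set a := ∫ ω, A ω ∂P with ha
  set b := ∫ ω, B ω ∂P with hb
  have hkey : ∀ ω, (A ω - a) * (B ω - b) = A ω * B ω - b * A ω - (a * B ω - a * b) :=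
    fun ω => by ring
  simp_rw [hkey]
  have i1 : Integrable (fun ω => A ω * B ω - b * A ω) P := by
    exact hAB.sub (hA.const_mul b)
  have i2 : Integrable (fun ω => a * B ω - a * b) P := by
    exact (hB.const_mul a).sub (integrable_const (a*b))
  rw [integral_sub i1 i2, integral_sub hAB (hA.const_mul b),
    integral_sub (hB.const_mul a) (integrable_const (a*b)),
    integral_const_mul, integral_const_mul, integral_const]
  simp only [measure_univ, ENNReal.toReal_one, probReal_univ, one_smul, ← ha, ← hb]
  ring

/-- Covariance of two real random variables: `Cov(X,Y) = E[(X - E X)(Y - E Y)]`. -/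
noncomputable def cov {Ω : Type*} [MeasurableSpace Ω] (P : Measure Ω) (X Y : Ω → ℝ) : ℝ :=
  ∫ ω, (X ω - ∫ a, X a ∂P) * (Y ω - ∫ a, Y a ∂P) ∂P

/-- in the IR-SV model with returns `r j = exp(h j / 2)·ε j`, where the
`ε j` are i.i.d. standard normal and independent of the innovation family `η`
(jointly: the combined family `Sum.elim η ε` is independent), for every `j ≥ 1` and
`m ≥ 1`, writing `ℓ = ∑_{i=j+1}^{j+m} g i`,
`Cov(r j ², r (j+m) ²) = exp(2μ + σ²/(1-φ²)) · (exp(σ² φ^ℓ/(1-φ²)) − 1)`;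
in particular the squared-return process is weakly stationary. -/
theorem irsv_squared_return_autocovariance
    {Ω : Type*} [MeasurableSpace Ω] (P : Measure Ω) [IsProbabilityMeasure P]
    (μ σ φ : ℝ) (hσ : 0 < σ) (hφ0 : 0 < φ) (hφ1 : φ < 1)
    (g : ℕ → ℝ) (hg : ∀ j, 2 ≤ j → 0 < g j)
    (η : ℕ → Ω → ℝ) (hmeasη : ∀ j, Measurable (η j))
    (ε : ℕ → Ω → ℝ) (hmeasε : ∀ j, Measurable (ε j))
    (hindep : iIndepFun (Sum.elim η ε) P)
    (hlaw1 : Measure.map (η 1) P = gaussianReal 0 (σ ^ 2 / (1 - φ ^ 2)).toNNReal)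
    (hlawj : ∀ j, 2 ≤ j → Measure.map (η j) P
      = gaussianReal 0 (σ ^ 2 * (1 - φ ^ (2 * g j)) / (1 - φ ^ 2)).toNNReal)
    (hlawε : ∀ j, Measure.map (ε j) P = gaussianReal 0 1)
    (x : ℕ → Ω → ℝ) (hx1 : x 1 = η 1)
    (hxrec : ∀ j, 2 ≤ j → x j = fun ω => φ ^ (g j) * x (j - 1) ω + η j ω)
    (h : ℕ → Ω → ℝ) (hh : ∀ j, h j = fun ω => μ + x j ω)
    (r : ℕ → Ω → ℝ) (hr : ∀ j, r j = fun ω => Real.exp (h j ω / 2) * ε j ω) :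
    ∀ j, 1 ≤ j → ∀ m, 1 ≤ m →
      cov P (fun ω => (r j ω) ^ 2) (fun ω => (r (j + m) ω) ^ 2)
        = Real.exp (2 * μ + σ ^ 2 / (1 - φ ^ 2))
          * (Real.exp (σ ^ 2 * φ ^ (∑ i ∈ Finset.Icc (j + 1) (j + m), g i)
              / (1 - φ ^ 2)) - 1) := by
  intro j hj m hm
  have h1φ : (0:ℝ) < 1 - φ ^ 2 := by nlinarith
  set V : ℝ := σ ^ 2 / (1 - φ ^ 2) with hVdef
  have hV : 0 ≤ V := by positivity
  have coe1 : ((σ ^ 2 / (1 - φ ^ 2)).toNNReal : ℝ) = V := Real.coe_toNNReal _ hV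
  have hrpow_le : ∀ n, 2 ≤ n → φ ^ (2 * g n) ≤ 1 := by
    intro n hn
    exact Real.rpow_le_one hφ0.le hφ1.le (by have := hg n hn; positivity)
  have coej : ∀ n, 2 ≤ n →
      ((σ ^ 2 * (1 - φ ^ (2 * g n)) / (1 - φ ^ 2)).toNNReal : ℝ)
        = σ ^ 2 * (1 - φ ^ (2 * g n)) / (1 - φ ^ 2) := by
    intro n hn
    exact Real.coe_toNNReal _
      (div_nonneg (mul_nonneg (sq_nonneg σ) (by linarith [hrpow_le n hn])) h1φ.le)
  -- representation of x as a linear combination of the η's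
  have hrep : ∀ n, 1 ≤ n →
      x n = fun ω => ∑ i ∈ Finset.Icc 1 n, φ ^ (∑ k ∈ Finset.Icc (i+1) n, g k) * η i ω := by
    intro n hn
    induction n, hn using Nat.le_induction with
    | base =>
      funext ω
      rw [hx1, Finset.Icc_self, Finset.sum_singleton,
        show Finset.Icc 2 1 = (∅ : Finset ℕ) from Finset.Icc_eq_empty (by omega),
        Finset.sum_empty, Real.rpow_zero, one_mul]
    | succ n hn ih =>
      rw [hxrec (n+1) (by omega)]
      funext ω
      simp only [Nat.add_sub_cancel, ih]
      rw [Finset.sum_Icc_succ_top (by omega : 1 ≤ n + 1), Finset.mul_sum]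
      congr 1
      · refine Finset.sum_congr rfl fun i hi => ?_
        have hin : i + 1 ≤ n + 1 := by
          have := (Finset.mem_Icc.mp hi).2; omega
        rw [Finset.sum_Icc_succ_top hin, Real.rpow_add hφ0]
        ring
      · rw [show Finset.Icc (n+1+1) (n+1) = (∅ : Finset ℕ) from Finset.Icc_eq_empty (by omega),
          Finset.sum_empty, Real.rpow_zero, one_mul]
  -- single linear representation
  have hlin1 : ∀ n, 1 ≤ n → ∀ t : ℝ, ∃ a : ℕ → ℝ,
      (fun ω => t * x n ω) = fun ω => ∑ i ∈ Finset.Icc 1 n, a i * η i ω := by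
    intro n hn t
    refine ⟨fun i => t * φ ^ (∑ k ∈ Finset.Icc (i+1) n, g k), ?_⟩
    funext ω
    simp only [hrep n hn, Finset.mul_sum]
    exact Finset.sum_congr rfl fun i _ => by ring
  -- pair linear representation
  have hlin2 : ∀ n, j ≤ n → ∀ t s : ℝ, ∃ a : ℕ → ℝ,
      (fun ω => t * x j ω + s * x n ω) = fun ω => ∑ i ∈ Finset.Icc 1 n, a i * η i ω := by
    intro n hjn t s
    refine ⟨fun i => (if i ≤ j then t * φ ^ (∑ k ∈ Finset.Icc (i+1) j, g k) else 0)
      + s * φ ^ (∑ k ∈ Finset.Icc (i+1) n, g k), ?_⟩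
    funext ω
    simp only [hrep j hj, hrep n (le_trans hj hjn)]
    simp_rw [add_mul]
    rw [Finset.sum_add_distrib]
    congr 1
    · rw [Finset.mul_sum]
      rw [← Finset.sum_subset (Finset.Icc_subset_Icc_right hjn)
        (fun i _ hij => ?_)]
      · refine Finset.sum_congr rfl fun i hi => ?_
        rw [if_pos (Finset.mem_Icc.mp hi).2]
        ring
      · have hij' : ¬ i ≤ j := fun hle => hij (Finset.mem_Icc.mpr ⟨(Finset.mem_Icc.mp ‹i ∈ Finset.Icc 1 n›).1, hle⟩)
        rw [if_neg hij', zero_mul]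
    · rw [Finset.mul_sum]
      exact Finset.sum_congr rfl fun i _ => by ring

  have hne : (1 - φ ^ 2) ≠ 0 := ne_of_gt h1φ
  have coe1' : ((V.toNNReal : ℝ≥0) : ℝ) = V := Real.coe_toNNReal _ hV
  -- E[exp(t x_n)] for all n ≥ 1
  have hL1 : ∀ n, 1 ≤ n → ∀ t : ℝ,
      Integrable (fun ω => Real.exp (t * x n ω)) P
        ∧ ∫ ω, Real.exp (t * x n ω) ∂P = Real.exp (V * t ^ 2 / 2) := by
    intro n hn
    induction n, hn using Nat.le_induction with
    | base =>
      intro t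
      have hG := gauss_map_exp (hmeasη 1) hlaw1 t
      rw [coe1] at hG
      rw [hx1]
      exact hG
    | succ n hn ih =>
      intro t
      set A := φ ^ (g (n+1)) with hA
      have hx' : (fun ω => Real.exp (t * x (n+1) ω))
          = fun ω => Real.exp ((t*A) * x n ω) * Real.exp (t * η (n+1) ω) := by
        rw [hxrec (n+1) (by omega)]
        funext ω
        simp only [Nat.add_sub_cancel]
        rw [← Real.exp_add]
        congr 1
        ring
      obtain ⟨a, ha⟩ := hlin1 n hn (t*A)
      have hbase := indep_lin_aux hmeasη hmeasε hindep a (Finset.Icc 1 n)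
        ({Sum.inl (n+1)} : Finset (ℕ ⊕ ℕ))
        (fun i hi hmem => by
          simp only [Finset.mem_singleton, Sum.inl.injEq] at hmem
          have h2 := (Finset.mem_Icc.mp hi).2
          omega)
        (fun p => Real.exp (t * p ⟨Sum.inl (n+1), Finset.mem_singleton_self _⟩))
        (by fun_prop)
      rw [← ha] at hbase
      have hI : IndepFun (fun ω => Real.exp ((t*A) * x n ω))
          (fun ω => Real.exp (t * η (n+1) ω)) P := by
        have hc := hbase.comp Real.measurable_exp measurable_id
        simpa [Function.comp_def] using hc
      have hη := gauss_map_exp (hmeasη (n+1)) (hlawj (n+1) (by omega)) t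
      have i1 := (ih (t*A)).1
      constructor
      · rw [hx']
        exact hI.integrable_mul i1 hη.1
      · rw [hx']
        have hint : ∫ ω, Real.exp ((t*A) * x n ω) * Real.exp (t * η (n+1) ω) ∂P
            = (∫ ω, Real.exp ((t*A) * x n ω) ∂P) * ∫ ω, Real.exp (t * η (n+1) ω) ∂P :=
          hI.integral_fun_mul_eq_mul_integral i1.aestronglyMeasurable hη.1.aestronglyMeasurable
        rw [hint, (ih (t*A)).2, hη.2, coej (n+1) (by omega), ← Real.exp_add]
        congr 1
        have hA2 : φ ^ (2 * g (n+1)) = A ^ 2 := by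
          rw [hA, two_mul, Real.rpow_add hφ0, sq]
        rw [hA2, hVdef]
        field_simp
        ring
  -- E[exp(t x_j + s x_{j+m})]
  have hL2 : ∀ m' : ℕ, ∀ t s : ℝ,
      Integrable (fun ω => Real.exp (t * x j ω + s * x (j+m') ω)) P
        ∧ ∫ ω, Real.exp (t * x j ω + s * x (j+m') ω) ∂P
          = Real.exp ((t^2 + 2*t*s*φ ^ (∑ i ∈ Finset.Icc (j+1) (j+m'), g i) + s^2) * V / 2) := by
    intro m'
    induction m' with
    | zero =>
      intro t s
      have he : (fun ω => Real.exp (t * x j ω + s * x (j+0) ω))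
          = fun ω => Real.exp ((t+s) * x j ω) := by
        funext ω
        congr 1
        simp only [Nat.add_zero]
        ring
      have hic : Finset.Icc (j+1) (j+0) = (∅ : Finset ℕ) := Finset.Icc_eq_empty (by omega)
      rw [he, hic, Finset.sum_empty, Real.rpow_zero]
      refine ⟨(hL1 j hj (t+s)).1, ?_⟩
      rw [(hL1 j hj (t+s)).2]
      congr 1
      ring
    | succ m' ih =>
      intro t s
      set A := φ ^ (g (j+m'+1)) with hA
      have hx' : (fun ω => Real.exp (t * x j ω + s * x (j+(m'+1)) ω))
          = fun ω => Real.exp (t * x j ω + (s*A) * x (j+m') ω) * Real.exp (s * η (j+m'+1) ω) := by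
        rw [show j+(m'+1) = (j+m')+1 by omega, hxrec ((j+m')+1) (by omega)]
        funext ω
        simp only [Nat.add_sub_cancel]
        rw [← Real.exp_add]
        congr 1
        ring
      obtain ⟨a, ha⟩ := hlin2 (j+m') (by omega) t (s*A)
      have hbase := indep_lin_aux hmeasη hmeasε hindep a (Finset.Icc 1 (j+m'))
        ({Sum.inl (j+m'+1)} : Finset (ℕ ⊕ ℕ))
        (fun i hi hmem => by
          simp only [Finset.mem_singleton, Sum.inl.injEq] at hmem
          have h2 := (Finset.mem_Icc.mp hi).2
          omega)
        (fun p => Real.exp (s * p ⟨Sum.inl (j+m'+1), Finset.mem_singleton_self _⟩))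
        (by fun_prop)
      rw [← ha] at hbase
      have hI : IndepFun (fun ω => Real.exp (t * x j ω + (s*A) * x (j+m') ω))
          (fun ω => Real.exp (s * η (j+m'+1) ω)) P := by
        have hc := hbase.comp Real.measurable_exp measurable_id
        simpa [Function.comp_def] using hc
      have hη := gauss_map_exp (hmeasη (j+m'+1)) (hlawj (j+m'+1) (by omega)) s
      have i1 := (ih t (s*A)).1
      constructor
      · rw [hx']
        exact hI.integrable_mul i1 hη.1
      · rw [hx']
        have hint : ∫ ω, Real.exp (t * x j ω + (s*A) * x (j+m') ω) * Real.exp (s * η (j+m'+1) ω) ∂P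
            = (∫ ω, Real.exp (t * x j ω + (s*A) * x (j+m') ω) ∂P)
              * ∫ ω, Real.exp (s * η (j+m'+1) ω) ∂P :=
          hI.integral_fun_mul_eq_mul_integral i1.aestronglyMeasurable hη.1.aestronglyMeasurable
        rw [hint, (ih t (s*A)).2, hη.2, coej (j+m'+1) (by omega), ← Real.exp_add]
        congr 1
        have hsum : ∑ i ∈ Finset.Icc (j+1) (j+(m'+1)), g i
            = (∑ i ∈ Finset.Icc (j+1) (j+m'), g i) + g (j+m'+1) := by
          rw [show j+(m'+1) = (j+m')+1 by omega]
          exact Finset.sum_Icc_succ_top (by omega) g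
        have hA2 : φ ^ (2 * g (j+m'+1)) = A ^ 2 := by
          rw [hA, two_mul, Real.rpow_add hφ0, sq]
        rw [hsum, Real.rpow_add hφ0, hA2, hVdef]
        field_simp
        ring

  -- noise second moments
  have hεsq : ∀ k : ℕ, Integrable (fun ω => (ε k ω)^2) P ∧ ∫ ω, (ε k ω)^2 ∂P = 1 :=
    fun k => gauss_map_sq (hmeasε k) (hlawε k)
  have hsqexp : ∀ z : ℝ, Real.exp (z/2) ^ 2 = Real.exp z := by
    intro z
    rw [← Real.exp_nat_mul]
    congr 1
    push_cast
    ring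
  have hA_eq : ∀ k, 1 ≤ k → (fun ω => (r k ω)^2)
      = fun ω => Real.exp μ * (Real.exp (1 * x k ω) * (ε k ω)^2) := by
    intro k hk
    funext ω
    rw [hr k, hh k]
    simp only [one_mul]
    rw [mul_pow, hsqexp, Real.exp_add, mul_assoc]
  have hIxε : ∀ k, 1 ≤ k → IndepFun (fun ω => Real.exp (1 * x k ω)) (fun ω => (ε k ω)^2) P := by
    intro k hk
    obtain ⟨a, ha⟩ := hlin1 k hk 1
    have hbase := indep_lin_aux hmeasη hmeasε hindep a (Finset.Icc 1 k)
      ({Sum.inr k} : Finset (ℕ ⊕ ℕ))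
      (fun i hi hmem => by simp at hmem)
      (fun p => (p ⟨Sum.inr k, Finset.mem_singleton_self _⟩)^2)
      ((measurable_pi_apply _).pow_const 2)
    rw [← ha] at hbase
    have hc := hbase.comp Real.measurable_exp measurable_id
    simpa [Function.comp_def] using hc
  have hEA : ∀ k, 1 ≤ k → Integrable (fun ω => (r k ω)^2) P
      ∧ ∫ ω, (r k ω)^2 ∂P = Real.exp μ * (Real.exp (V * 1^2/2) * 1) := by
    intro k hk
    have hI := hIxε k hk
    have i1 := (hL1 k hk 1).1
    have i2 := (hεsq k).1
    constructor
    · rw [hA_eq k hk]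
      exact (hI.integrable_mul i1 i2).const_mul _
    · rw [hA_eq k hk, integral_const_mul]
      have hint : ∫ ω, Real.exp (1 * x k ω) * (ε k ω)^2 ∂P
          = (∫ ω, Real.exp (1 * x k ω) ∂P) * ∫ ω, (ε k ω)^2 ∂P :=
        hI.integral_fun_mul_eq_mul_integral i1.aestronglyMeasurable i2.aestronglyMeasurable
      rw [hint, (hL1 k hk 1).2, (hεsq k).2]
  have hIεε : IndepFun (fun ω => (ε j ω)^2) (fun ω => (ε (j+m) ω)^2) P := by
    have hne' : (Sum.inr j : ℕ ⊕ ℕ) ≠ Sum.inr (j+m) := by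
      simp only [ne_eq, Sum.inr.injEq]
      omega
    have hp := hindep.indepFun hne'
    have hc := hp.comp (measurable_id.pow_const 2) (measurable_id.pow_const 2)
    simpa [Function.comp_def] using hc
  have hεεint : Integrable (fun ω => (ε j ω)^2 * (ε (j+m) ω)^2) P :=
    hIεε.integrable_mul (hεsq j).1 (hεsq (j+m)).1
  have hεεval : ∫ ω, (ε j ω)^2 * (ε (j+m) ω)^2 ∂P = 1 := by
    have hint : ∫ ω, (ε j ω)^2 * (ε (j+m) ω)^2 ∂P
        = (∫ ω, (ε j ω)^2 ∂P) * ∫ ω, (ε (j+m) ω)^2 ∂P :=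
      hIεε.integral_fun_mul_eq_mul_integral (hεsq j).1.aestronglyMeasurable (hεsq (j+m)).1.aestronglyMeasurable
    rw [hint, (hεsq j).2, (hεsq (j+m)).2, mul_one]
  have hAB_eq : (fun ω => (r j ω)^2 * (r (j+m) ω)^2)
      = fun ω => Real.exp (2*μ)
        * (Real.exp (1 * x j ω + 1 * x (j+m) ω) * ((ε j ω)^2 * (ε (j+m) ω)^2)) := by
    funext ω
    rw [hr j, hr (j+m), hh j, hh (j+m)]
    simp only [one_mul]
    rw [mul_pow, mul_pow, hsqexp, hsqexp, Real.exp_add μ (x j ω), Real.exp_add μ (x (j+m) ω),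
      Real.exp_add (x j ω) (x (j+m) ω), show (2:ℝ)*μ = μ + μ by ring, Real.exp_add μ μ]
    ring
  have hIpair : IndepFun (fun ω => Real.exp (1 * x j ω + 1 * x (j+m) ω))
      (fun ω => (ε j ω)^2 * (ε (j+m) ω)^2) P := by
    obtain ⟨a, ha⟩ := hlin2 (j+m) (by omega) 1 1
    have hbase := indep_lin_aux hmeasη hmeasε hindep a (Finset.Icc 1 (j+m))
      ({Sum.inr j, Sum.inr (j+m)} : Finset (ℕ ⊕ ℕ))
      (fun i hi hmem => by simp at hmem)
      (fun p => (p ⟨Sum.inr j, by simp⟩)^2 * (p ⟨Sum.inr (j+m), by simp⟩)^2)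
      (by fun_prop)
    rw [← ha] at hbase
    have hc := hbase.comp Real.measurable_exp measurable_id
    simpa [Function.comp_def] using hc
  have hABint : Integrable (fun ω => (r j ω)^2 * (r (j+m) ω)^2) P := by
    rw [hAB_eq]
    exact (hIpair.integrable_mul (hL2 m 1 1).1 hεεint).const_mul _
  have hABval : ∫ ω, (r j ω)^2 * (r (j+m) ω)^2 ∂P
      = Real.exp (2*μ)
        * (Real.exp ((1^2 + 2*1*1*φ ^ (∑ i ∈ Finset.Icc (j+1) (j+m), g i) + 1^2) * V / 2) * 1) := by
    rw [hAB_eq, integral_const_mul]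
    have hint : ∫ ω, Real.exp (1 * x j ω + 1 * x (j+m) ω) * ((ε j ω)^2 * (ε (j+m) ω)^2) ∂P
        = (∫ ω, Real.exp (1 * x j ω + 1 * x (j+m) ω) ∂P)
          * ∫ ω, (ε j ω)^2 * (ε (j+m) ω)^2 ∂P :=
      hIpair.integral_fun_mul_eq_mul_integral (hL2 m 1 1).1.aestronglyMeasurable hεεint.aestronglyMeasurable
    rw [hint, (hL2 m 1 1).2, hεεval]
  have hcov := cov_expand P (hEA j hj).1 (hEA (j+m) (by omega)).1 hABint
  unfold cov
  rw [hcov, hABval, (hEA j hj).2, (hEA (j+m) (by omega)).2]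
  have final : ∀ Q : ℝ, Real.exp (2*μ) * (Real.exp ((1^2 + 2*1*1*Q + 1^2) * V / 2) * 1)
      - (Real.exp μ * (Real.exp (V*1^2/2) * 1)) * (Real.exp μ * (Real.exp (V*1^2/2) * 1))
      = Real.exp (2*μ + V) * (Real.exp (V*Q) - 1) := by
    intro Q
    have e2μ : Real.exp (2*μ) = Real.exp μ * Real.exp μ := by
      rw [← Real.exp_add]; congr 1; ring
    have eK : Real.exp ((1^2 + 2*1*1*Q + 1^2) * V / 2)
        = Real.exp (V/2) * Real.exp (V/2) * Real.exp (V*Q) := by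
      rw [← Real.exp_add, ← Real.exp_add]; congr 1; ring
    have eV1 : Real.exp (V*1^2/2) = Real.exp (V/2) := by congr 1; ring
    have eRHS : Real.exp (2*μ + V)
        = Real.exp μ * Real.exp μ * (Real.exp (V/2) * Real.exp (V/2)) := by
      rw [← Real.exp_add, ← Real.exp_add, ← Real.exp_add]; congr 1; ring
    rw [e2μ, eK, eV1, eRHS]
    ring
  rw [show σ^2 * φ ^ (∑ i ∈ Finset.Icc (j+1) (j+m), g i) / (1-φ^2)
      = V * φ ^ (∑ i ∈ Finset.Icc (j+1) (j+m), g i) from by rw [hVdef]; ring]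
  exact final _
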